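/- (Special case ρ ≡ 0 of Theorem 3.5.) Let A ∈ ℝ^{n×M}, B ∈ ℝ^{n×m}, 𝓜 : ℝⁿ → ℝ^M, Π : ℝⁿ → ℝⁿ, U ⊆ ℝᵐ, Û ⊆ ℝᵐ. Let S : ℝⁿ × ℝⁿ → ℝ be nonnegative, let α > 0 satisfy α‖x − x̂‖² ≤ S(x, x̂) for all x, x̂ ∈ ℝⁿ, and suppose there exist γ ∈ (0,1) and ψ > 0 such that for all x, x̂ ∈ ℝⁿ and û ∈ Û there exists u ∈ U with S(A·𝓜(x) + B·u, Π(A·𝓜(x̂) + B·û)) ≤ γ·S(x, x̂) + ψ. Fix any η₁ ∈ (0,1) and set ψ̄ = ψ/((1 − γ)η₁). Then the relation R = {(x, x̂) : S(x, x̂) ≤ ψ̄} satisfies: (i) for every (x, x̂) ∈ R, ‖x − x̂‖ ≤ (ψ̄/α)^{1/2}; and (ii) for every (x, x̂) ∈ R and every û ∈ Û there exists u ∈ U such that (A·𝓜(x) + B·u, Π(A·𝓜(x̂) + B·û)) ∈ R. -/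

import Mathlib

open Matrix

/-- Special case `ρ ≡ 0` of Theorem 3.5 (Remark 3.6): with `ψ̄ = ψ/((1 − γ)η₁)`, the relation
`R = {(x, x̂) : S(x, x̂) ≤ ψ̄}` gives `ε`-closeness with `ε = (ψ̄/α)^{1/2}` and is invariant
under the matched dynamics. -/
theorem asf_relation_rho_zero
    (n m M : ℕ) (hn : 0 < n) (hm : 0 < m) (hM : 0 < M)
    (A : Matrix (Fin n) (Fin M) ℝ) (B : Matrix (Fin n) (Fin m) ℝ)
    (𝓜 : EuclideanSpace ℝ (Fin n) → EuclideanSpace ℝ (Fin M))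
    (Piq : EuclideanSpace ℝ (Fin n) → EuclideanSpace ℝ (Fin n))
    (U Uh : Set (EuclideanSpace ℝ (Fin m)))
    (S : EuclideanSpace ℝ (Fin n) → EuclideanSpace ℝ (Fin n) → ℝ)
    (hS0 : ∀ x xh, 0 ≤ S x xh)
    (α : ℝ) (hα : 0 < α)
    (hlow : ∀ x xh : EuclideanSpace ℝ (Fin n), α * ‖x - xh‖ ^ 2 ≤ S x xh)
    (γ ψ : ℝ) (hγ : γ ∈ Set.Ioo (0 : ℝ) 1) (hψ : 0 < ψ)
    (hASF : ∀ x xh : EuclideanSpace ℝ (Fin n), ∀ uh ∈ Uh, ∃ u ∈ U,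
      S (WithLp.toLp 2 (A.mulVec (𝓜 x) + B.mulVec u)) (Piq (WithLp.toLp 2 (A.mulVec (𝓜 xh) + B.mulVec uh)))
        ≤ γ * S x xh + ψ)
    (η₁ : ℝ) (hη₁ : η₁ ∈ Set.Ioo (0 : ℝ) 1)
    (ψbar : ℝ) (hψbar : ψbar = ψ / ((1 - γ) * η₁)) :
    (∀ x xh : EuclideanSpace ℝ (Fin n), S x xh ≤ ψbar →
        ‖x - xh‖ ≤ (ψbar / α) ^ ((1 : ℝ) / 2)) ∧
    (∀ x xh : EuclideanSpace ℝ (Fin n), S x xh ≤ ψbar →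
        ∀ uh ∈ Uh, ∃ u ∈ U,
          S (WithLp.toLp 2 (A.mulVec (𝓜 x) + B.mulVec u)) (Piq (WithLp.toLp 2 (A.mulVec (𝓜 xh) + B.mulVec uh))) ≤ ψbar) := by
  obtain ⟨hγ0, hγ1⟩ := hγ
  obtain ⟨hη0, hη1⟩ := hη₁
  have hden : 0 < (1 - γ) * η₁ := mul_pos (by linarith) hη0
  have hψbar0 : 0 < ψbar := by rw [hψbar]; positivity
  constructor
  · intro x xh hR
    have h1 : α * ‖x - xh‖ ^ 2 ≤ ψbar := le_trans (hlow x xh) hR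
    have h2 : ‖x - xh‖ ^ 2 ≤ ψbar / α := by
      rw [le_div_iff₀ hα]; linarith [h1]
    rw [show (ψbar / α) ^ ((1:ℝ)/2) = Real.sqrt (ψbar / α) from (Real.sqrt_eq_rpow _).symm]
    rw [Real.le_sqrt (norm_nonneg _)]
    · exact h2
    · positivity
  · intro x xh hR uh huh
    obtain ⟨u, hu, hle⟩ := hASF x xh uh huh
    refine ⟨u, hu, hle.trans ?_⟩
    have hkey : ψ ≤ (1 - γ) * ψbar := by
      rw [hψbar]
      have heq : (1 - γ) * (ψ / ((1 - γ) * η₁)) = ψ / η₁ := by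
        field_simp
      rw [heq, le_div_iff₀ hη0]
      nlinarith
    nlinarith [hR, hγ0.le]
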